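/- Let λ > 0, α_k > 0 with α_k λ < 1 for all k, ∑_k α_k = ∞, and let (b_k) be a sequence of nonnegative reals with b_k → 0. Define S_k by S_0 = α_0 b_0 and S_{k+1} = (1 - α_{k+1} λ) S_k + α_{k+1} b_{k+1}. Then S_k → 0. -/

import Mathlib

open Filter

theorem stmt6 (lam : ℝ) (α b S : ℕ → ℝ) (hlam : 0 < lam)
    (hα : ∀ k, 0 < α k) (halam : ∀ k, α k * lam < 1)
    (hdiv : Tendsto (fun n => ∑ i ∈ Finset.range n, α i) atTop atTop)
    (hb : ∀ k, 0 ≤ b k) (hb0 : Tendsto b atTop (nhds 0))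
    (hS0 : S 0 = α 0 * b 0)
    (hSrec : ∀ k, S (k + 1) = (1 - α (k + 1) * lam) * S k + α (k + 1) * b (k + 1)) :
    Tendsto S atTop (nhds 0) := by
  have hfac : ∀ k, 0 < 1 - α k * lam := fun k => sub_pos.2 (halam k)
  have hSnn : ∀ k, 0 ≤ S k := by
    intro k
    induction k with
    | zero => rw [hS0]; exact mul_nonneg (hα 0).le (hb 0)
    | succ n ih =>
      rw [hSrec n]
      have := mul_nonneg (hfac (n+1)).le ih
      have := mul_nonneg (hα (n+1)).le (hb (n+1))
      linarith
  rw [Metric.tendsto_atTop]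
  intro ε hε
  set c : ℝ := ε / 2 with hc
  have hcpos : 0 < c := by positivity
  obtain ⟨N, hN⟩ := (Metric.tendsto_atTop.1 hb0) (lam * c) (by positivity)
  have hbN : ∀ k ≥ N, b k < lam * c := by
    intro k hk
    have := hN k hk
    rw [Real.dist_eq, sub_zero, abs_of_nonneg (hb k)] at this
    exact this
  set P : ℕ → ℝ := fun m => ∏ j ∈ Finset.range m, (1 - α (N + 1 + j) * lam) with hP
  have hPnn : ∀ m, 0 ≤ P m := fun m =>
    Finset.prod_nonneg (fun j _ => (hfac _).le)
  have key : ∀ m, S (N + m) - c ≤ P m * (S N - c) := by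
    intro m
    induction m with
    | zero => simp [hP]
    | succ n ih =>
      have h1 : N + (n + 1) = (N + n) + 1 := by ring
      rw [h1, hSrec (N + n)]
      have hb' : b ((N + n) + 1) < lam * c := hbN _ (by omega)
      have halg : (1 - α ((N+n)+1) * lam) * S (N+n) + α ((N+n)+1) * b ((N+n)+1) - c
          = (1 - α ((N+n)+1) * lam) * (S (N+n) - c) + α ((N+n)+1) * (b ((N+n)+1) - lam * c) := by
        ring
      rw [halg]
      have h2 : α ((N+n)+1) * (b ((N+n)+1) - lam * c) ≤ 0 :=
        mul_nonpos_of_nonneg_of_nonpos (hα _).le (by linarith)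
      have h3 : (1 - α ((N+n)+1) * lam) * (S (N+n) - c) ≤ (1 - α ((N+n)+1) * lam) * (P n * (S N - c)) :=
        mul_le_mul_of_nonneg_left ih (hfac _).le
      have h4 : P (n + 1) = P n * (1 - α (N + 1 + n) * lam) := by
        rw [hP]; exact Finset.prod_range_succ _ n
      have h5 : N + 1 + n = (N + n) + 1 := by ring
      rw [h4, h5]
      nlinarith [hPnn n]
  have hPexp : ∀ m, P m ≤ Real.exp (-(lam * ∑ j ∈ Finset.range m, α (N + 1 + j))) := by
    intro m
    induction m with
    | zero => simp [hP]
    | succ n ih =>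
      have h4 : P (n + 1) = P n * (1 - α (N + 1 + n) * lam) := by
        rw [hP]; exact Finset.prod_range_succ _ n
      have h6 : 1 - α (N + 1 + n) * lam ≤ Real.exp (-(α (N + 1 + n) * lam)) := by
        have := Real.add_one_le_exp (-(α (N + 1 + n) * lam))
        linarith
      calc P (n + 1) = P n * (1 - α (N + 1 + n) * lam) := h4
        _ ≤ Real.exp (-(lam * ∑ j ∈ Finset.range n, α (N + 1 + j))) * Real.exp (-(α (N + 1 + n) * lam)) := by
            apply mul_le_mul ih h6 (hfac _).le (Real.exp_nonneg _)
        _ = Real.exp (-(lam * ∑ j ∈ Finset.range (n+1), α (N + 1 + j))) := by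
            rw [← Real.exp_add, Finset.sum_range_succ]; congr 1; ring
  have htail : Tendsto (fun m => ∑ j ∈ Finset.range m, α (N + 1 + j)) atTop atTop := by
    have heq : ∀ m, ∑ j ∈ Finset.range m, α (N + 1 + j)
        = (∑ i ∈ Finset.range (N + 1 + m), α i) - ∑ i ∈ Finset.range (N + 1), α i := by
      intro m
      rw [Finset.sum_range_add]
      ring
    simp only [heq]
    apply Tendsto.atTop_add _ tendsto_const_nhds
    have h9 : Tendsto (fun m : ℕ => N + 1 + m) atTop atTop := by
      simpa [Nat.add_comm] using tendsto_add_atTop_nat (N + 1)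
    exact hdiv.comp h9
  have hP0 : Tendsto P atTop (nhds 0) := by
    apply squeeze_zero hPnn hPexp
    have hmul' : Tendsto (fun m => lam * ∑ j ∈ Finset.range m, α (N + 1 + j)) atTop atTop :=
      Tendsto.const_mul_atTop hlam htail
    have : Tendsto (fun m => -(lam * ∑ j ∈ Finset.range m, α (N + 1 + j))) atTop atBot :=
      tendsto_neg_atBot_iff.2 hmul'
    exact Real.tendsto_exp_atBot.comp this
  have hmul : Tendsto (fun m => P m * (S N - c)) atTop (nhds 0) := by
    simpa using hP0.mul_const (S N - c)
  obtain ⟨M, hM⟩ := (Metric.tendsto_atTop.1 hmul) c hcpos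
  refine ⟨N + M, fun n hn => ?_⟩
  obtain ⟨m, rfl⟩ : ∃ m, n = N + m := ⟨n - N, by omega⟩
  have hm : m ≥ M := by omega
  have := hM m hm
  rw [Real.dist_eq, sub_zero] at this
  have h7 : P m * (S N - c) < c := lt_of_abs_lt this
  have h8 := key m
  rw [Real.dist_eq, sub_zero, abs_of_nonneg (hSnn _)]
  have : c + c = ε := by rw [hc]; ring
  linarith
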